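/- Let Ω be a compact Hausdorff space, let E and F be real Banach spaces, and let T : C(Ω, E) → F be a nuclear operator. Then for every f ∈ C(Ω), the nuclear operator T^#(f) : E → F, e ↦ T(f ⊗ e), satisfies ‖T^#(f)‖_nuc ≤ ‖f‖_∞ · ‖T‖_nuc. (Quantitative form of Theorem 3.) -/
import Mathlib


open MeasureTheory Filter Topology

section Defs

variable {X Y : Type*} [NormedAddCommGroup X] [NormedSpace ℝ X]
  [NormedAddCommGroup Y] [NormedSpace ℝ Y]

/-- A bounded linear operator is nuclear if it admits a representation
`S x = Σ_n x'_n(x) • y_n` with `Σ_n ‖x'_n‖·‖y_n‖ < ∞`. -/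
def IsNuclear (S : X →L[ℝ] Y) : Prop :=
  ∃ (x' : ℕ → (X →L[ℝ] ℝ)) (y : ℕ → Y),
    Summable (fun n => ‖x' n‖ * ‖y n‖) ∧ ∀ x, HasSum (fun n => x' n x • y n) (S x)

/-- The nuclear norm: the infimum of `Σ_n ‖x'_n‖·‖y_n‖` over all nuclear
representations of `S`. -/
noncomputable def nuclearNorm (S : X →L[ℝ] Y) : ℝ :=
  sInf {c : ℝ | ∃ (x' : ℕ → (X →L[ℝ] ℝ)) (y : ℕ → Y),
    Summable (fun n => ‖x' n‖ * ‖y n‖) ∧ (∀ x, HasSum (fun n => x' n x • y n) (S x)) ∧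
    c = ∑' n, ‖x' n‖ * ‖y n‖}

variable {Ω : Type*} [TopologicalSpace Ω]

/-- The elementary tensor `f ⊗ e : ω ↦ f(ω) • e` in `C(Ω, E)`. -/
noncomputable def tensor (f : C(Ω, ℝ)) (e : X) : C(Ω, X) :=
  ⟨fun ω => f ω • e, (map_continuous f).smul continuous_const⟩

theorem tensor_apply (f : C(Ω, ℝ)) (e : X) (ω : Ω) : tensor f e ω = f ω • e := rfl

variable [CompactSpace Ω]

theorem norm_tensor_le (f : C(Ω, ℝ)) (e : X) : ‖tensor f e‖ ≤ ‖f‖ * ‖e‖ := by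
  refine (ContinuousMap.norm_le _ (by positivity)).2 fun ω => ?_
  rw [tensor_apply, norm_smul]
  exact mul_le_mul_of_nonneg_right (f.norm_coe_le_norm ω) (norm_nonneg e)

/-- The operator `T^# f : E → F`, `e ↦ T (f ⊗ e)`, induced by `T : C(Ω,E) → F`. -/
noncomputable def sharp (T : C(Ω, X) →L[ℝ] Y) (f : C(Ω, ℝ)) : X →L[ℝ] Y :=
  LinearMap.mkContinuous
    { toFun := fun e => T (tensor f e)
      map_add' := fun a b => by
        show T (tensor f (a + b)) = T (tensor f a) + T (tensor f b)
        rw [show tensor f (a + b) = tensor f a + tensor f b from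
          ContinuousMap.ext fun ω => smul_add _ _ _, map_add]
      map_smul' := fun c a => by
        show T (tensor f (c • a)) = c • T (tensor f a)
        rw [show tensor f (c • a) = c • tensor f a from
          ContinuousMap.ext fun ω => smul_comm _ _ _, _root_.map_smul] }
    (‖T‖ * ‖f‖)
    (fun e => by
      calc ‖T (tensor f e)‖ ≤ ‖T‖ * ‖tensor f e‖ := T.le_opNorm _
        _ ≤ ‖T‖ * (‖f‖ * ‖e‖) :=
          mul_le_mul_of_nonneg_left (norm_tensor_le f e) (norm_nonneg T)
        _ = ‖T‖ * ‖f‖ * ‖e‖ := (mul_assoc _ _ _).symm)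

theorem sharp_apply (T : C(Ω, X) →L[ℝ] Y) (f : C(Ω, ℝ)) (e : X) :
    sharp T f e = T (tensor f e) := rfl

/-- The set of sums `Σ_i ‖m(A_i)‖` over finite families of pairwise disjoint
measurable subsets of `B`. -/
def partitionSums {S : Type*} [MeasurableSpace S] (m : Set S → X) (B : Set S) : Set ℝ :=
  {c : ℝ | ∃ (k : ℕ) (A : Fin k → Set S), (∀ i, MeasurableSet (A i)) ∧
    Pairwise (Function.onFun Disjoint A) ∧ (∀ i, A i ⊆ B) ∧ c = ∑ i, ‖m (A i)‖}

/-- The variation `|m|(B)` of a vector measure. -/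
noncomputable def variation {S : Type*} [MeasurableSpace S] (m : Set S → X) (B : Set S) : ℝ :=
  sSup (partitionSums m B)

/-- A Banach space `X` has the Radon–Nikodym property if every countably additive
`X`-valued vector measure of bounded variation which is absolutely continuous with
respect to a finite measure `μ` has a Bochner-integrable density with respect to `μ`. -/
def HasRNP (X : Type*) [NormedAddCommGroup X] [NormedSpace ℝ X] : Prop :=
  ∀ (S : Type) (_ : MeasurableSpace S) (μ : Measure S), IsFiniteMeasure μ →
    ∀ m : VectorMeasure S X, BddAbove (partitionSums (⇑m) Set.univ) →
      (∀ A : Set S, MeasurableSet A → μ A = 0 → m A = 0) →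
      ∃ g : S → X, Integrable g μ ∧ ∀ A : Set S, MeasurableSet A → m A = ∫ x in A, g x ∂μ

end Defs

section Aux

variable {Ω : Type*} [TopologicalSpace Ω] [CompactSpace Ω]
  {X Y : Type*} [NormedAddCommGroup X] [NormedSpace ℝ X]
  [NormedAddCommGroup Y] [NormedSpace ℝ Y]

/-- The map `e ↦ f ⊗ e` as a continuous linear map. -/
noncomputable def tensorCLM (f : C(Ω, ℝ)) : X →L[ℝ] C(Ω, X) :=
  LinearMap.mkContinuous
    { toFun := tensor f
      map_add' := fun a b => ContinuousMap.ext fun ω => smul_add _ _ _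
      map_smul' := fun c a => ContinuousMap.ext fun ω => smul_comm _ _ _ }
    ‖f‖ (fun e => norm_tensor_le f e)

theorem norm_tensorCLM_le (f : C(Ω, ℝ)) : ‖(tensorCLM f : X →L[ℝ] C(Ω, X))‖ ≤ ‖f‖ :=
  LinearMap.mkContinuous_norm_le _ (norm_nonneg f) _

theorem nuclearNorm_bddBelow (S : X →L[ℝ] Y) :
    BddBelow {c : ℝ | ∃ (x' : ℕ → (X →L[ℝ] ℝ)) (y : ℕ → Y),
      Summable (fun n => ‖x' n‖ * ‖y n‖) ∧ (∀ x, HasSum (fun n => x' n x • y n) (S x)) ∧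
      c = ∑' n, ‖x' n‖ * ‖y n‖} := by
  refine ⟨0, fun c hc => ?_⟩
  obtain ⟨x', y, _, _, rfl⟩ := hc
  exact tsum_nonneg fun n => by positivity

theorem nuclearNorm_sharp_le_rep {Ω : Type*} [TopologicalSpace Ω] [CompactSpace Ω]
    {E F : Type*} [NormedAddCommGroup E] [NormedSpace ℝ E]
    [NormedAddCommGroup F] [NormedSpace ℝ F]
    (T : C(Ω, E) →L[ℝ] F) (f : C(Ω, ℝ)) (x' : ℕ → (C(Ω, E) →L[ℝ] ℝ)) (y : ℕ → F)
    (hsum : Summable (fun n => ‖x' n‖ * ‖y n‖))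
    (hrep : ∀ g, HasSum (fun n => x' n g • y n) (T g)) :
    IsNuclear (sharp T f) ∧
      nuclearNorm (sharp T f) ≤ ‖f‖ * ∑' n, ‖x' n‖ * ‖y n‖ := by
  set e' : ℕ → E →L[ℝ] ℝ := fun n => (x' n).comp (tensorCLM f) with he'
  have hle : ∀ n, ‖e' n‖ * ‖y n‖ ≤ ‖f‖ * (‖x' n‖ * ‖y n‖) := by
    intro n
    have h1 : ‖e' n‖ ≤ ‖x' n‖ * ‖f‖ :=
      ((x' n).opNorm_comp_le _).trans
        (mul_le_mul_of_nonneg_left (norm_tensorCLM_le f) (norm_nonneg _))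
    calc ‖e' n‖ * ‖y n‖ ≤ (‖x' n‖ * ‖f‖) * ‖y n‖ :=
          mul_le_mul_of_nonneg_right h1 (norm_nonneg _)
      _ = ‖f‖ * (‖x' n‖ * ‖y n‖) := by ring
  have hsum' : Summable (fun n => ‖e' n‖ * ‖y n‖) :=
    (hsum.mul_left ‖f‖).of_nonneg_of_le (fun n => by positivity) hle
  have hrep' : ∀ e, HasSum (fun n => e' n e • y n) (sharp T f e) := fun e => hrep (tensor f e)
  refine ⟨⟨e', y, hsum', hrep'⟩, ?_⟩
  have hmem : (∑' n, ‖e' n‖ * ‖y n‖) ∈ {c : ℝ | ∃ (x' : ℕ → (E →L[ℝ] ℝ)) (y : ℕ → F),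
      Summable (fun n => ‖x' n‖ * ‖y n‖) ∧ (∀ x, HasSum (fun n => x' n x • y n) (sharp T f x)) ∧
      c = ∑' n, ‖x' n‖ * ‖y n‖} := ⟨e', y, hsum', hrep', rfl⟩
  calc nuclearNorm (sharp T f) ≤ ∑' n, ‖e' n‖ * ‖y n‖ :=
        csInf_le (nuclearNorm_bddBelow _) hmem
    _ ≤ ∑' n, ‖f‖ * (‖x' n‖ * ‖y n‖) := Summable.tsum_le_tsum hle hsum' (hsum.mul_left ‖f‖)
    _ = ‖f‖ * ∑' n, ‖x' n‖ * ‖y n‖ := tsum_mul_left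

end Aux

/-- Quantitative Theorem 3: `T^#(f)` is nuclear and
`‖T^#(f)‖_nuc ≤ ‖f‖·‖T‖_nuc`. -/
theorem nuclearNorm_sharp_le {Ω : Type*} [TopologicalSpace Ω] [CompactSpace Ω] [T2Space Ω]
    {E F : Type*} [NormedAddCommGroup E] [NormedSpace ℝ E] [CompleteSpace E]
    [NormedAddCommGroup F] [NormedSpace ℝ F] [CompleteSpace F]
    (T : C(Ω, E) →L[ℝ] F) (hT : IsNuclear T) (f : C(Ω, ℝ)) :
    IsNuclear (sharp T f) ∧ nuclearNorm (sharp T f) ≤ ‖f‖ * nuclearNorm T := by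
  obtain ⟨x', y, hsum, hrep⟩ := hT
  refine ⟨(nuclearNorm_sharp_le_rep T f x' y hsum hrep).1, ?_⟩
  set A : Set ℝ := {c : ℝ | ∃ (x' : ℕ → (C(Ω, E) →L[ℝ] ℝ)) (y : ℕ → F),
    Summable (fun n => ‖x' n‖ * ‖y n‖) ∧ (∀ x, HasSum (fun n => x' n x • y n) (T x)) ∧
    c = ∑' n, ‖x' n‖ * ‖y n‖} with hA
  have hAne : A.Nonempty := ⟨_, x', y, hsum, hrep, rfl⟩
  have hkey : ∀ c ∈ A, nuclearNorm (sharp T f) ≤ ‖f‖ * c := by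
    rintro c ⟨x'', y'', hsum'', hrep'', rfl⟩
    exact (nuclearNorm_sharp_le_rep T f x'' y'' hsum'' hrep'').2
  show nuclearNorm (sharp T f) ≤ ‖f‖ * sInf A
  rcases eq_or_lt_of_le (norm_nonneg f) with hf | hf
  · obtain ⟨c, hc⟩ := hAne
    calc nuclearNorm (sharp T f) ≤ ‖f‖ * c := hkey c hc
      _ = ‖f‖ * sInf A := by rw [← hf]; ring
  · rw [← div_le_iff₀' hf]
    refine le_csInf hAne fun c hc => ?_
    rw [div_le_iff₀' hf]
    exact hkey c hc
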